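/- Let r be an odd integer with 1 ≤ r ≤ n, let x₁,…,x_r ∈ F₂ⁿ, and suppose A and A + Σᵢ₌₁^r xᵢxᵢᵀ are both invertible symmetric n×n matrices over F₂. Then there exists an index i such that xᵢᵀ A⁻¹ xᵢ = 0. -/

import Mathlib

open Matrix

/-- An involution without fixed points on `Fin m` forces `m` to be even. -/
lemma even_of_fpf_involution {m : ℕ} (σ : Equiv.Perm (Fin m))
    (hinv : ∀ i, σ (σ i) = i) (hfp : ∀ i, σ i ≠ i) : Even m := by
  have h : (∑ _i : Fin m, (1 : ZMod 2)) = 0 := by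
    refine Finset.sum_ninvolution (fun i => σ i) (fun a => ?_) (fun a _ => hfp a)
      (fun a => Finset.mem_univ _) hinv
    decide
  simp only [Finset.sum_const, Finset.card_univ, Fintype.card_fin, nsmul_eq_mul, mul_one] at h
  exact (even_iff_two_dvd).mpr ((ZMod.natCast_eq_zero_iff m 2).mp h)

/-- An odd-size symmetric matrix over `F₂` with zero diagonal has zero determinant. -/
lemma alt_det_zero {m : ℕ} (hm : Odd m) (M : Matrix (Fin m) (Fin m) (ZMod 2))
    (hsymm : Mᵀ = M) (hdiag : ∀ i, M i i = 0) : M.det = 0 := by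
  rw [Matrix.det_apply']
  have hsign : ∀ σ : Equiv.Perm (Fin m), (Equiv.Perm.sign σ : ZMod 2) = 1 := by
    intro σ
    rcases Int.units_eq_one_or (Equiv.Perm.sign σ) with h | h <;> simp [h] <;> decide
  have : (∑ σ : Equiv.Perm (Fin m), ∏ i, M (σ i) i) = 0 := by
    refine Finset.sum_ninvolution (fun σ => σ⁻¹) ?_ ?_ (fun σ => Finset.mem_univ _)
      (fun σ => inv_inv σ)
    · intro σ
      have hprod : (∏ i, M (σ⁻¹ i) i) = ∏ i, M (σ i) i := by
        rw [← Equiv.prod_comp σ (fun i => M (σ⁻¹ i) i)]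
        simp only [Equiv.Perm.inv_def, Equiv.symm_apply_apply]
        refine Finset.prod_congr rfl fun i _ => ?_
        conv_rhs => rw [← hsymm]
        simp [Matrix.transpose_apply]
      rw [hprod, CharTwo.add_self_eq_zero]
    · intro σ hne
      by_contra h
      apply hne
      beta_reduce at h
      have hinv : ∀ i, σ (σ i) = i := by
        intro i
        nth_rewrite 2 [← h]
        exact σ.eq_inv_iff_eq.mp rfl
      -- σ is an involution; since m is odd it has a fixed point
      by_cases hfp : ∃ i, σ i = i
      · obtain ⟨i, hi⟩ := hfp
        refine Finset.prod_eq_zero (Finset.mem_univ i) ?_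
        rw [hi, hdiag]
      · push_neg at hfp
        exact absurd (even_of_fpf_involution σ hinv hfp) (Nat.not_even_iff_odd.mpr hm)
  simp only [hsign, one_mul]
  exact this

/-- If `r` is odd, `1 ≤ r ≤ n`, and both `A` and `A + ∑ xᵢxᵢᵀ` are invertible symmetric
matrices over `F₂`, then `xᵢᵀ A⁻¹ xᵢ = 0` for some `i`. -/
theorem exists_diag_zero {n r : ℕ} (hodd : Odd r) (hr1 : 1 ≤ r) (hrn : r ≤ n)
    (x : Fin r → Fin n → ZMod 2) (A : Matrix (Fin n) (Fin n) (ZMod 2))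
    (hAs : A.IsSymm) (hA : IsUnit A)
    (hBs : (A + ∑ i, vecMulVec (x i) (x i)).IsSymm)
    (hBu : IsUnit (A + ∑ i, vecMulVec (x i) (x i))) :
    ∃ i, x i ⬝ᵥ A⁻¹ *ᵥ x i = 0 := by
  by_contra hcon
  push_neg at hcon
  have hone : ∀ i, x i ⬝ᵥ A⁻¹ *ᵥ x i = 1 := by
    intro i
    have h2 : ∀ a : ZMod 2, a ≠ 0 → a = 1 := by decide
    exact h2 _ (hcon i)
  -- set up U with columns x i
  set U : Matrix (Fin n) (Fin r) (ZMod 2) := fun j i => x i j with hU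
  have hsum : (∑ i, vecMulVec (x i) (x i)) = U * Uᵀ := by
    ext a b
    simp only [Matrix.mul_apply, Matrix.transpose_apply]
    simp [Matrix.mul_apply, vecMulVec_apply, Matrix.sum_apply, hU]
  set M : Matrix (Fin r) (Fin r) (ZMod 2) := Uᵀ * A⁻¹ * U with hM
  have hMentry : ∀ i j, M i j = x i ⬝ᵥ A⁻¹ *ᵥ x j := by
    intro i j
    simp only [hM, Matrix.mul_apply, Matrix.transpose_apply]
    simp only [hM, Matrix.mul_apply, dotProduct, mulVec, Matrix.transpose_apply, hU,
      Finset.sum_mul, Finset.mul_sum]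
    rw [Finset.sum_comm]
    apply Finset.sum_congr rfl
    intro a _
    apply Finset.sum_congr rfl
    intro b _
    ring
  -- invertibility transfer
  have hAinv : IsUnit A.det := (Matrix.isUnit_iff_isUnit_det A).mp hA
  have hB : A + ∑ i, vecMulVec (x i) (x i) = A * (1 + A⁻¹ * U * Uᵀ) := by
    rw [hsum, mul_add, mul_one, ← Matrix.mul_assoc, ← Matrix.mul_assoc,
      Matrix.mul_nonsing_inv A hAinv, Matrix.one_mul]
  have hdetB : IsUnit (A * (1 + A⁻¹ * U * Uᵀ)).det := by
    rw [← hB]; exact (Matrix.isUnit_iff_isUnit_det _).mp hBu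
  rw [Matrix.det_mul] at hdetB
  have hdet1M : (1 + M).det ≠ 0 := by
    have h := (isUnit_of_mul_isUnit_right hdetB)
    rw [Matrix.det_one_add_mul_comm] at h
    rw [hM, Matrix.mul_assoc]
    exact h.ne_zero
  -- 1 + M is symmetric with zero diagonal, size r odd : contradiction
  have hAinvSymm : (A⁻¹)ᵀ = A⁻¹ := by
    rw [Matrix.transpose_nonsing_inv, hAs.eq]
  have hsymm : (1 + M)ᵀ = 1 + M := by
    rw [Matrix.transpose_add, Matrix.transpose_one, hM,
      Matrix.transpose_mul, Matrix.transpose_mul, Matrix.transpose_transpose, hAinvSymm,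
      Matrix.mul_assoc]
  have hdiag : ∀ i, (1 + M) i i = 0 := by
    intro i
    have : M i i = 1 := by rw [hMentry i i, hone i]
    rw [Matrix.add_apply, Matrix.one_apply_eq, this]
    decide
  exact hdet1M (alt_det_zero hodd (1 + M) hsymm hdiag)
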